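/- If f : (0,∞) → (0,∞) is Borel measurable and slowly varying, then for every γ > 0, lim_{x→∞} f(x)/x^γ = 0. -/

import Mathlib

open Filter MeasureTheory Set

/-- Uniform convergence theorem (one needed direction): for a measurable `h` with
`h (x + s) - h x → 0` for every fixed `s`, the convergence is uniform for `s ∈ [0,1]`. -/
lemma uct (h : ℝ → ℝ) (hm : Measurable h)
    (hc : ∀ s : ℝ, Tendsto (fun u => h (u + s) - h u) atTop (nhds 0))
    (ε : ℝ) (hε : 0 < ε) :
    ∀ᶠ x in atTop, ∀ t ∈ Set.Icc (0:ℝ) 1, |h (x + t) - h x| ≤ ε := by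
  by_contra hcon
  rw [Filter.not_eventually] at hcon
  -- extract sequences x m → ∞, t m ∈ [0,1] with ε < |h (x m + t m) - h (x m)|
  have hseq : ∀ m : ℕ, ∃ x : ℝ, (m : ℝ) ≤ x ∧ ∃ t ∈ Set.Icc (0:ℝ) 1,
      ε < |h (x + t) - h x| := by
    intro m
    rcases (frequently_atTop.mp hcon) (m : ℝ) with ⟨x, hx, hbad⟩
    push_neg at hbad
    rcases hbad with ⟨t, ht, hlt⟩
    exact ⟨x, hx, t, ht, hlt⟩
  choose x hxge t ht hbad using hseq
  have hx : Tendsto x atTop atTop :=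
    tendsto_atTop_mono hxge tendsto_natCast_atTop_atTop
  have hxt : Tendsto (fun m => x m + t m) atTop atTop := by
    apply tendsto_atTop_mono (fun m => ?_) hx
    nlinarith [(ht m).1]
  -- the two families of good sets
  set A : ℕ → Set ℝ := fun n =>
    Set.Icc (0:ℝ) 2 ∩ ⋂ m, ⋂ (_ : n ≤ m), {u | |h (x m + u) - h (x m)| ≤ ε / 3} with hA
  set S : ℕ → Set ℝ := fun n =>
    Set.Icc (0:ℝ) 1 ∩ ⋂ m, ⋂ (_ : n ≤ m), {s | |h (x m + t m + s) - h (x m + t m)| ≤ ε / 3}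
    with hS
  have hameas : ∀ n, MeasurableSet (A n) := by
    intro n
    refine measurableSet_Icc.inter (MeasurableSet.iInter fun m => MeasurableSet.iInter
      fun _ => ?_)
    exact measurableSet_le (((hm.comp (measurable_const_add (x m))).sub_const _).abs)
      measurable_const
  have hsmeas : ∀ n, MeasurableSet (S n) := by
    intro n
    refine measurableSet_Icc.inter (MeasurableSet.iInter fun m => MeasurableSet.iInter
      fun _ => ?_)
    exact measurableSet_le (((hm.comp (measurable_const_add (x m + t m))).sub_const _).abs)
      measurable_const
  have hAmono : Monotone A := by
    intro a b hab u hu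
    refine ⟨hu.1, Set.mem_iInter.mpr fun m => Set.mem_iInter.mpr fun hm' => ?_⟩
    exact Set.mem_iInter.mp (Set.mem_iInter.mp hu.2 m) (le_trans hab hm')
  have hSmono : Monotone S := by
    intro a b hab u hu
    refine ⟨hu.1, Set.mem_iInter.mpr fun m => Set.mem_iInter.mpr fun hm' => ?_⟩
    exact Set.mem_iInter.mp (Set.mem_iInter.mp hu.2 m) (le_trans hab hm')
  have hAU : ⋃ n, A n = Set.Icc (0:ℝ) 2 := by
    apply Set.Subset.antisymm
    · exact Set.iUnion_subset fun n => Set.inter_subset_left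
    · intro u hu
      have h1 : Tendsto (fun m => h (x m + u) - h (x m)) atTop (nhds 0) := by
        have := (hc u).comp hx
        simpa [Function.comp_def] using this
      have h2 : ∀ᶠ m in atTop, |h (x m + u) - h (x m)| ≤ ε / 3 := by
        have := h1.eventually (Metric.closedBall_mem_nhds (0:ℝ) (by positivity : (0:ℝ) < ε/3))
        simpa [Real.dist_eq] using this
      rcases eventually_atTop.mp h2 with ⟨n, hn⟩
      exact Set.mem_iUnion.mpr ⟨n, hu, by
        simp only [Set.mem_iInter, Set.mem_setOf_eq]; exact hn⟩
  have hSU : ⋃ n, S n = Set.Icc (0:ℝ) 1 := by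
    apply Set.Subset.antisymm
    · exact Set.iUnion_subset fun n => Set.inter_subset_left
    · intro s hs
      have h1 : Tendsto (fun m => h (x m + t m + s) - h (x m + t m)) atTop (nhds 0) := by
        have := (hc s).comp hxt
        simpa [Function.comp_def] using this
      have h2 : ∀ᶠ m in atTop, |h (x m + t m + s) - h (x m + t m)| ≤ ε / 3 := by
        have := h1.eventually (Metric.closedBall_mem_nhds (0:ℝ) (by positivity : (0:ℝ) < ε/3))
        simpa [Real.dist_eq] using this
      rcases eventually_atTop.mp h2 with ⟨n, hn⟩
      exact Set.mem_iUnion.mpr ⟨n, hs, by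
        simp only [Set.mem_iInter, Set.mem_setOf_eq]; exact hn⟩
  -- measures tend to the full measures
  have hAtend : Tendsto (fun n => volume (A n)) atTop (nhds (ENNReal.ofReal 2)) := by
    have := tendsto_measure_iUnion_atTop (μ := volume) hAmono
    rwa [hAU, Real.volume_Icc, sub_zero] at this
  have hStend : Tendsto (fun n => volume (S n)) atTop (nhds (ENNReal.ofReal 1)) := by
    have := tendsto_measure_iUnion_atTop (μ := volume) hSmono
    rwa [hSU, Real.volume_Icc, sub_zero] at this
  have hAev : ∀ᶠ n in atTop, ENNReal.ofReal (3/2) < volume (A n) :=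
    hAtend.eventually_const_lt (by
      rw [ENNReal.ofReal_lt_ofReal_iff (by norm_num)]; norm_num)
  have hSev : ∀ᶠ n in atTop, ENNReal.ofReal (1/2) < volume (S n) :=
    hStend.eventually_const_lt (by
      rw [ENNReal.ofReal_lt_ofReal_iff (by norm_num)]; norm_num)
  rcases (hAev.and hSev).exists with ⟨N, hAN, hSN⟩
  -- translate S N by t N and intersect with A N
  set B : Set ℝ := (fun u => u + -(t N)) ⁻¹' S N with hB
  have hBmeas : MeasurableSet B := (hsmeas N).preimage (measurable_add_const _)
  have hBvol : volume B = volume (S N) := by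
    rw [hB]
    exact measure_preimage_add_right volume (-(t N)) (S N)
  have hBsub : B ⊆ Set.Icc (0:ℝ) 2 := by
    intro u hu
    have h1 : u + -(t N) ∈ Set.Icc (0:ℝ) 1 := (hu : _ ∈ S N).1
    constructor
    · nlinarith [h1.1, (ht N).1]
    · nlinarith [h1.2, (ht N).2]
  have hnonempty : (A N ∩ B).Nonempty := by
    by_contra hne
    rw [Set.not_nonempty_iff_eq_empty] at hne
    have hdisj : Disjoint (A N) B := Set.disjoint_iff_inter_eq_empty.mpr hne
    have h1 : volume (A N ∪ B) = volume (A N) + volume B :=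
      measure_union hdisj hBmeas
    have h2 : volume (A N ∪ B) ≤ ENNReal.ofReal 2 := by
      have hsub : A N ∪ B ⊆ Set.Icc (0:ℝ) 2 :=
        Set.union_subset (fun u hu => hu.1) hBsub
      have := measure_mono (μ := volume) hsub
      rwa [Real.volume_Icc, sub_zero] at this
    have h3 : ENNReal.ofReal 2 < volume (A N) + volume B := by
      have := ENNReal.add_lt_add hAN (hBvol ▸ hSN : ENNReal.ofReal (1/2) < volume B)
      rwa [← ENNReal.ofReal_add (by norm_num) (by norm_num), show (3/2 : ℝ) + 1/2 = 2 by
        norm_num] at this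
    rw [h1] at h2
    exact absurd (lt_of_lt_of_le h3 h2) (lt_irrefl _)
  rcases hnonempty with ⟨u, huA, huB⟩
  have h1 : |h (x N + u) - h (x N)| ≤ ε / 3 := by
    have := huA.2
    simp only [Set.mem_iInter, Set.mem_setOf_eq] at this
    exact this N le_rfl
  have h2 : |h (x N + t N + (u + -(t N))) - h (x N + t N)| ≤ ε / 3 := by
    have := (huB : u + -(t N) ∈ S N).2
    simp only [Set.mem_iInter, Set.mem_setOf_eq] at this
    exact this N le_rfl
  have heq : x N + t N + (u + -(t N)) = x N + u := by ring
  rw [heq] at h2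
  have : |h (x N + t N) - h (x N)| ≤ 2 * (ε / 3) := by
    calc |h (x N + t N) - h (x N)|
        ≤ |h (x N + t N) - h (x N + u)| + |h (x N + u) - h (x N)| := abs_sub_le _ _ _
      _ ≤ ε / 3 + ε / 3 := add_le_add (by rw [abs_sub_comm]; exact h2) h1
      _ = 2 * (ε / 3) := by ring
  linarith [hbad N]

theorem stmt3 (f : ℝ → ℝ) (hmeas : Measurable f) (hpos : ∀ x : ℝ, 0 < x → 0 < f x)
    (hsv : ∀ t : ℝ, 0 < t → Tendsto (fun x => f (t * x) / f x) atTop (nhds 1)) :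
    ∀ γ : ℝ, 0 < γ → Tendsto (fun x => f x / x ^ γ) atTop (nhds 0) := by
  intro γ hγ
  set h : ℝ → ℝ := fun u => Real.log (f (Real.exp u)) with hh
  have hmeash : Measurable h := Real.measurable_log.comp (hmeas.comp Real.measurable_exp)
  have hc : ∀ s : ℝ, Tendsto (fun u => h (u + s) - h u) atTop (nhds 0) := by
    intro s
    have h1 : Tendsto (fun u => f (Real.exp s * Real.exp u) / f (Real.exp u)) atTop
        (nhds 1) := (hsv (Real.exp s) (Real.exp_pos s)).comp Real.tendsto_exp_atTop
    have h2 : Tendsto (fun u => Real.log (f (Real.exp s * Real.exp u) / f (Real.exp u)))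
        atTop (nhds 0) := by
      have := (Real.continuousAt_log one_ne_zero).tendsto.comp h1
      simpa [Function.comp_def] using this
    refine h2.congr (fun u => ?_)
    rw [Real.log_div (ne_of_gt (hpos _ (by positivity))) (ne_of_gt (hpos _ (Real.exp_pos u))),
      hh, ← Real.exp_add]
    ring_nf
  -- h u ≤ h X + (γ/2) * (u - X + 1) for u ≥ X
  obtain ⟨X, hX⟩ := eventually_atTop.mp (uct h hmeash hc (γ/2) (by positivity))
  have key : ∀ n : ℕ, ∀ u : ℝ, X + n ≤ u → u ≤ X + n + 1 → h u ≤ h X + (γ/2) * (n + 1) := by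
    intro n
    induction n with
    | zero =>
      intro u h1 h2
      push_cast at h1 h2
      have hmem : u - X ∈ Set.Icc (0:ℝ) 1 := ⟨by linarith, by linarith⟩
      have h3 := hX X le_rfl (u - X) hmem
      have heq : X + (u - X) = u := by ring
      rw [heq] at h3
      have h4 := (abs_le.mp h3).2
      push_cast
      linarith
    | succ n ih =>
      intro u h1 h2
      have hu1 : X + n ≤ u - 1 := by push_cast at h1 ⊢; linarith
      have hu2 : u - 1 ≤ X + n + 1 := by push_cast at h2 ⊢; linarith
      have h3 := ih (u - 1) hu1 hu2
      have h4 := hX (u - 1) (by push_cast at h1; linarith) 1 ⟨by norm_num, le_rfl⟩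
      have heq : u - 1 + 1 = u := by ring
      rw [heq] at h4
      have := (abs_le.mp h4).2
      push_cast at h3 ⊢
      linarith
  have hbound : ∀ u : ℝ, X ≤ u → h u ≤ h X + (γ/2) * (u - X + 1) := by
    intro u hu
    set n : ℕ := ⌊u - X⌋₊ with hn
    have h1 : (n : ℝ) ≤ u - X := Nat.floor_le (by linarith)
    have h2 : u - X < n + 1 := Nat.lt_floor_add_one _
    have := key n u (by linarith) (by linarith)
    nlinarith
  -- conclude: h u - γ * u → -∞
  have htop : Tendsto (fun u => h u - γ * u) atTop atBot := by
    have hv : Tendsto (fun u : ℝ => (h X + (γ/2) * (1 - X)) + -(γ/2) * u) atTop atBot := by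
      apply tendsto_atBot_add_const_left
      exact Tendsto.const_mul_atTop_of_neg (by linarith : -(γ/2) < 0) tendsto_id
    refine tendsto_atBot_mono' atTop ?_ hv
    filter_upwards [eventually_ge_atTop X] with u hu
    have := hbound u hu
    nlinarith
  -- conclude
  have hexp : Tendsto (fun u => Real.exp (h u - γ * u)) atTop (nhds 0) :=
    Real.tendsto_exp_atBot.comp htop
  have hfinal : Tendsto (fun x => Real.exp (h (Real.log x) - γ * Real.log x)) atTop
      (nhds 0) := hexp.comp Real.tendsto_log_atTop
  refine hfinal.congr' ?_
  filter_upwards [eventually_ge_atTop (1:ℝ)] with x hx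
  have hx0 : 0 < x := lt_of_lt_of_le one_pos hx
  rw [Real.exp_sub, hh]
  simp only []
  have h1 : Real.exp (Real.log x) = x := Real.exp_log hx0
  rw [h1, Real.exp_log (hpos x hx0), Real.rpow_def_of_pos hx0]
  ring_nf
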